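/- Let $\varepsilon_{gi}$, $\varepsilon_{gj}$ be random variables in a cluster $g$, and let $(\varepsilon_{g_1 i_1})_{(g_1,i_1) \in N^1}$ and $(\varepsilon_{g_2 j_2})_{(g_2,j_2) \in N^2}$ be random variables from two finite nonempty index sets $N^1, N^2$ such that: (a) the collection indexed by $N^1$, the collection indexed by $N^2$, and the pair $(\varepsilon_{gi}, \varepsilon_{gj})$ are mutually independent, and (b) all variables are square-integrable with $\mathbb{E}[\varepsilon_{g_1 i_1}] = 0$ for all $(g_1,i_1) \in N^1$ and $\mathbb{E}[\varepsilon_{g_2 j_2}] = 0$ for all $(g_2,j_2) \in N^2$. Define $\varepsilon^{\Delta_1}_{gi} = \varepsilon_{gi} - \frac{1}{|N^1|}\sum_{(g_1,i_1) \in N^1} \varepsilon_{g_1 i_1}$ and $\varepsilon^{\Delta_2}_{gj} = \varepsilon_{gj} - \frac{1}{|N^2|}\sum_{(g_2,j_2) \in N^2} \varepsilon_{g_2 j_2}$. Then $\mathbb{E}[\varepsilon^{\Delta_1}_{gi}\,\varepsilon^{\Delta_2}_{gj}] = \mathbb{E}[\varepsilon_{gi}\varepsilon_{gj}]$. -/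

import Mathlib

open MeasureTheory ProbabilityTheory

lemma l2_mul_integrable {Ω : Type*} [MeasurableSpace Ω] {P : Measure Ω}
    {f g : Ω → ℝ} (hf : AEStronglyMeasurable f P) (hg : AEStronglyMeasurable g P)
    (h2f : MemLp f 2 P) (h2g : MemLp g 2 P) :
    Integrable (fun ω => f ω * g ω) P := by
  have hb : ∀ ω, ‖f ω * g ω‖ ≤ (f ω ^ 2 + g ω ^ 2) / 2 := by
    intro ω
    rw [Real.norm_eq_abs, abs_mul]
    nlinarith [sq_nonneg (|f ω| - |g ω|), sq_abs (f ω), sq_abs (g ω),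
      abs_nonneg (f ω), abs_nonneg (g ω)]
  exact ((h2f.integrable_sq.add h2g.integrable_sq).div_const 2).mono'
    (hf.mul hg) (Filter.Eventually.of_forall hb)

/-- Exact unbiasedness of the CNN pseudo-residual product: when the two sets of mean-zero
neighbors come from companion clusters independent of each other and of cluster `g`, the
product of the two centered pseudo-residuals has expectation equal to the within-cluster
covariance, with no bias-correction factor. -/
theorem stmt_5 {Ω : Type*} [MeasurableSpace Ω] (P : Measure Ω) [IsProbabilityMeasure P]
    {ι κ : Type*} [Fintype ι] [Fintype κ] [Nonempty ι] [Nonempty κ]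
    (egi egj : Ω → ℝ) (a : ι → Ω → ℝ) (b : κ → Ω → ℝ)
    (hm1 : Measurable egi) (hm2 : Measurable egj)
    (hma : ∀ i, Measurable (a i)) (hmb : ∀ j, Measurable (b j))
    (hL1 : MemLp egi 2 P) (hL2 : MemLp egj 2 P)
    (hLa : ∀ i, MemLp (a i) 2 P) (hLb : ∀ j, MemLp (b j) 2 P)
    (hza : ∀ i, ∫ ω, a i ω ∂P = 0) (hzb : ∀ j, ∫ ω, b j ω ∂P = 0)
    (hind1 : IndepFun (fun ω => (egi ω, egj ω))
      (fun ω => ((fun i => a i ω), (fun j => b j ω))) P)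
    (hind2 : IndepFun (fun ω (i : ι) => a i ω) (fun ω (j : κ) => b j ω) P) :
    ∫ ω, (egi ω - (∑ i, a i ω) / (Fintype.card ι : ℝ)) *
        (egj ω - (∑ j, b j ω) / (Fintype.card κ : ℝ)) ∂P
      = ∫ ω, egi ω * egj ω ∂P := by
  set A : Ω → ℝ := fun ω => (∑ i, a i ω) / (Fintype.card ι : ℝ) with hA
  set B : Ω → ℝ := fun ω => (∑ j, b j ω) / (Fintype.card κ : ℝ) with hB
  have hmA : Measurable A := (Finset.measurable_sum _ (fun i _ => hma i)).div_const _
  have hmB : Measurable B := (Finset.measurable_sum _ (fun j _ => hmb j)).div_const _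
  have hLA : MemLp A 2 P := by
    have h : MemLp (∑ i, a i) 2 P := memLp_finset_sum' _ (fun i _ => hLa i)
    have := h.const_mul ((Fintype.card ι : ℝ)⁻¹)
    simpa [hA, div_eq_mul_inv, mul_comm, Finset.sum_apply] using this
  have hLB : MemLp B 2 P := by
    have h : MemLp (∑ j, b j) 2 P := memLp_finset_sum' _ (fun j _ => hLb j)
    have := h.const_mul ((Fintype.card κ : ℝ)⁻¹)
    simpa [hB, div_eq_mul_inv, mul_comm, Finset.sum_apply] using this
  have hEA : ∫ ω, A ω ∂P = 0 := by
    have hi : ∀ i : ι, Integrable (a i) P := fun i => (hLa i).integrable one_le_two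
    simp [hA, integral_div, integral_finset_sum _ (fun i _ => hi i), hza]
  have hEB : ∫ ω, B ω ∂P = 0 := by
    have hi : ∀ j : κ, Integrable (b j) P := fun j => (hLb j).integrable one_le_two
    simp [hB, integral_div, integral_finset_sum _ (fun j _ => hi j), hzb]
  have hmapA : Measurable (fun p : (ι → ℝ) × (κ → ℝ) => (∑ i, p.1 i) / (Fintype.card ι : ℝ)) :=
    (Finset.measurable_sum _ (fun i _ => (measurable_pi_apply i).comp measurable_fst)).div_const _
  have hmapB : Measurable (fun p : (ι → ℝ) × (κ → ℝ) => (∑ j, p.2 j) / (Fintype.card κ : ℝ)) :=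
    (Finset.measurable_sum _ (fun j _ => (measurable_pi_apply j).comp measurable_snd)).div_const _
  have hXB : IndepFun egi B P := hind1.comp measurable_fst hmapB
  have hAY : IndepFun A egj P := (hind1.comp measurable_snd hmapA).symm
  have hAB : IndepFun A B P :=
    hind2.comp ((Finset.measurable_sum Finset.univ (fun i _ => measurable_pi_apply i)).div_const _)
      ((Finset.measurable_sum Finset.univ (fun j _ => measurable_pi_apply j)).div_const _)
  have hXY : Integrable (fun ω => egi ω * egj ω) P :=
    l2_mul_integrable hm1.aestronglyMeasurable hm2.aestronglyMeasurable hL1 hL2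
  have hXBi : Integrable (fun ω => egi ω * B ω) P :=
    l2_mul_integrable hm1.aestronglyMeasurable hmB.aestronglyMeasurable hL1 hLB
  have hAYi : Integrable (fun ω => A ω * egj ω) P :=
    l2_mul_integrable hmA.aestronglyMeasurable hm2.aestronglyMeasurable hLA hL2
  have hABi : Integrable (fun ω => A ω * B ω) P :=
    l2_mul_integrable hmA.aestronglyMeasurable hmB.aestronglyMeasurable hLA hLB
  have e1 : ∫ ω, egi ω * B ω ∂P = (∫ ω, egi ω ∂P) * ∫ ω, B ω ∂P :=
    hXB.integral_mul_eq_mul_integral hm1.aestronglyMeasurable hmB.aestronglyMeasurable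
  have e2 : ∫ ω, A ω * egj ω ∂P = (∫ ω, A ω ∂P) * ∫ ω, egj ω ∂P :=
    hAY.integral_mul_eq_mul_integral hmA.aestronglyMeasurable hm2.aestronglyMeasurable
  have e3 : ∫ ω, A ω * B ω ∂P = (∫ ω, A ω ∂P) * ∫ ω, B ω ∂P :=
    hAB.integral_mul_eq_mul_integral hmA.aestronglyMeasurable hmB.aestronglyMeasurable
  rw [hEB, mul_zero] at e1
  rw [hEA, zero_mul] at e2
  rw [hEA, zero_mul] at e3
  have expand : ∀ ω, (egi ω - A ω) * (egj ω - B ω)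
      = egi ω * egj ω - egi ω * B ω - A ω * egj ω + A ω * B ω := fun ω => by ring
  have hsub1 : Integrable (fun ω => egi ω * egj ω - egi ω * B ω) P := hXY.sub hXBi
  have hsub2 : Integrable (fun ω => egi ω * egj ω - egi ω * B ω - A ω * egj ω) P :=
    hsub1.sub hAYi
  calc ∫ ω, (egi ω - A ω) * (egj ω - B ω) ∂P
      = ∫ ω, (egi ω * egj ω - egi ω * B ω - A ω * egj ω + A ω * B ω) ∂P := by
        simp_rw [expand]
    _ = ∫ ω, egi ω * egj ω ∂P := by
        rw [integral_add hsub2 hABi, integral_sub hsub1 hAYi, integral_sub hXY hXBi,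
          e1, e2, e3]
        ring
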